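/- Suppose a : ℝ → ℝ is increasing and odd, A its antiderivative (so A is even and strictly convex). Let ρ = Σᵢ mᵢ δ_{xᵢ} with mᵢ > 0 and S = W*ρ with W(x) = (1/2)e^{-|x|}, so ∂ₓS has jump -mᵢ at xᵢ. If for every i the jump relation [A(∂ₓS)]_{xᵢ} = 0 holds, i.e. A((mᵢ + cᵢ)/2) = A((-mᵢ + cᵢ)/2) with cᵢ = Σ_{j≠i} mⱼ e^{-|xⱼ - xᵢ|}, then cᵢ = 0 for all i; in particular, if n ≥ 2 with distinct points, no stationary configuration exists, so stationary states consist of a single Dirac mass. -/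

import Mathlib

theorem stmt_16 (a A : ℝ → ℝ)
    (ha : StrictMono a)
    (hodd : ∀ x, a (-x) = -a x)
    (hA : ∀ x, HasDerivAt A (a x) x)
    (n : ℕ) (x : Fin n → ℝ) (hx : Function.Injective x)
    (m : Fin n → ℝ) (hm : ∀ i, 0 < m i)
    (c : Fin n → ℝ)
    (hc : ∀ i, c i = ∑ j ∈ Finset.univ.erase i, m j * Real.exp (-|x j - x i|))
    (hstat : ∀ i, A ((m i + c i) / 2) = A ((-m i + c i) / 2)) :
    (∀ i, c i = 0) ∧ (2 ≤ n → False) := by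
  have a0 : a 0 = 0 := by have := hodd 0; rw [neg_zero] at this; linarith
  have hAdiff : Differentiable ℝ A := fun y => (hA y).differentiableAt
  -- A is even
  have heven : ∀ y : ℝ, A (-y) = A y := by
    have hconst : ∀ y z : ℝ, (A (-y) - A y) = (A (-z) - A z) := by
      apply is_const_of_deriv_eq_zero
      · exact fun y => ((hAdiff (-y)).comp y (differentiable_neg y)).sub (hAdiff y)
      · intro y
        have h1 : HasDerivAt (fun t => A (-t) - A t) (a (-y) * (-1) - a y) y :=
          (((hA (-y)).comp y (hasDerivAt_neg y))).sub (hA y)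
        rw [h1.deriv, hodd]; ring
    intro y
    have := hconst y 0
    simp at this
    linarith
  -- A strictly increasing on [0, ∞)
  have hmono : StrictMonoOn A (Set.Ici (0:ℝ)) := by
    apply strictMonoOn_of_deriv_pos (convex_Ici 0) hAdiff.continuous.continuousOn
    intro y hy
    rw [interior_Ici] at hy
    rw [(hA y).deriv]
    have : a 0 < a y := ha hy
    linarith
  have hcnn : ∀ i, 0 ≤ c i := by
    intro i
    rw [hc i]
    apply Finset.sum_nonneg
    intro j _
    exact mul_nonneg (hm j).le (Real.exp_pos _).le
  have hkey : ∀ i, c i = 0 := by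
    intro i
    set u := (m i + c i) / 2 with hu
    set w := (-m i + c i) / 2 with hw
    have hu0 : 0 < u := by have := hm i; have := hcnn i; rw [hu]; linarith
    have huw : w < u := by have := hm i; rw [hu, hw]; linarith
    rcases le_or_gt 0 w with h | h
    · exfalso
      have := hmono.injOn (Set.mem_Ici.2 hu0.le) (Set.mem_Ici.2 h) (hstat i)
      linarith
    · have hAw : A w = A (-w) := (heven w).symm
      have : u = -w := by
        apply hmono.injOn (Set.mem_Ici.2 hu0.le) (Set.mem_Ici.2 (by linarith : (0:ℝ) ≤ -w))
        rw [hstat i, hAw]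
      rw [hu, hw] at this
      linarith
  refine ⟨hkey, fun hn => ?_⟩
  set i : Fin n := ⟨0, by omega⟩ with hi
  set j : Fin n := ⟨1, by omega⟩ with hj
  have hij : j ≠ i := by simp [Fin.ext_iff, hi, hj]
  have hpos : 0 < c i := by
    rw [hc i]
    apply Finset.sum_pos'
    · intro k _; exact mul_nonneg (hm k).le (Real.exp_pos _).le
    · exact ⟨j, Finset.mem_erase.2 ⟨hij, Finset.mem_univ j⟩,
        mul_pos (hm j) (Real.exp_pos _)⟩
  rw [hkey i] at hpos
  exact lt_irrefl 0 hpos
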